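/- The estimator P̂_k(X^{(n)}) converges almost surely to p as n → ∞; in particular, the streak selection proportion is a consistent estimator of the conditional probability of success following k consecutive successes. -/

import Mathlib

open Finset Filter Topology

def cnt (K r m : ℕ) : ℕ := if r < m then (m - r - 1)/K + 1 else 0

lemma cnt_spec {K : ℕ} (hK : 0 < K) (r m t : ℕ) : t < cnt K r m ↔ r + t * K < m := by
  unfold cnt; split_ifs with h
  · constructor
    · intro ht
      have h1 : t ≤ (m - r - 1)/K := Nat.lt_succ_iff.mp ht
      have := (Nat.le_div_iff_mul_le hK).mp h1
      omega
    · intro ht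
      have h1 : t * K ≤ m - r - 1 := by omega
      have := (Nat.le_div_iff_mul_le hK).mpr h1
      omega
  · constructor
    · omega
    · intro ht; omega

lemma split_sum {K : ℕ} (hK : 0 < K) (a : ℕ → ℝ) (m : ℕ) :
    ∑ i ∈ range m, a i = ∑ r ∈ range K, ∑ t ∈ range (cnt K r m), a (r + t * K) := by
  rw [Finset.sum_sigma']
  refine (Finset.sum_nbij' (fun x : Σ _ : ℕ, ℕ => x.1 + x.2 * K) (fun i => ⟨i % K, i / K⟩)
    ?_ ?_ ?_ ?_ ?_).symm
  · rintro ⟨r, t⟩ hx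
    simp only [Finset.mem_sigma, Finset.mem_range] at hx
    exact Finset.mem_range.mpr ((cnt_spec hK r m t).mp hx.2)
  · intro i hi
    simp only [Finset.mem_range] at hi
    simp only [Finset.mem_sigma, Finset.mem_range]
    refine ⟨Nat.mod_lt i hK, (cnt_spec hK _ m _).mpr ?_⟩
    rw [Nat.mod_add_div']
    exact hi
  · rintro ⟨r, t⟩ hx
    simp only [Finset.mem_sigma, Finset.mem_range] at hx
    have h1 : (r + t * K) % K = r := by
      rw [Nat.add_mul_mod_self_right, Nat.mod_eq_of_lt hx.1]
    have h2 : (r + t * K) / K = t := by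
      rw [Nat.add_mul_div_right _ _ hK, Nat.div_eq_of_lt hx.1, Nat.zero_add]
    simp [h1, h2]
  · intro i hi
    simp only [Nat.mod_add_div']
  · rintro ⟨r, t⟩ _
    rfl

lemma natdiv_lb (a b : ℕ) (h : 0 < b) : (a:ℝ)/b - 1 < ↑(a/b) := by
  have hm : a % b < b := Nat.mod_lt a h
  have hd := Nat.div_add_mod a b
  have h1 : a < b * (a/b) + b := by omega
  have hb : (0:ℝ) < b := by exact_mod_cast h
  have h2 : (a:ℝ) < (b:ℝ) * ↑(a/b) + b := by exact_mod_cast h1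
  rw [sub_lt_iff_lt_add, div_lt_iff₀ hb]
  nlinarith

lemma cnt_tendsto_atTop {K : ℕ} (hK : 0 < K) (r : ℕ) :
    Tendsto (fun m => cnt K r m) atTop atTop := by
  refine tendsto_atTop_atTop.2 fun b => ⟨r + b * K + 1, fun m hm => ?_⟩
  rcases Nat.eq_zero_or_pos b with hb | hb
  · omega
  · have hmul : (b-1) * K ≤ b * K := Nat.mul_le_mul_right K (by omega)
    have hlt : r + (b-1) * K < m := by omega
    have h2 : b - 1 < cnt K r m := (cnt_spec hK r m (b-1)).mpr hlt
    omega

lemma cnt_ratio {K : ℕ} (hK : 0 < K) (r : ℕ) (hr : r < K) :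
    Tendsto (fun m : ℕ => (cnt K r m : ℝ)/m) atTop (𝓝 (1/K)) := by
  have hKR : (0:ℝ) < K := by exact_mod_cast hK
  have h1 : Tendsto (fun m : ℕ => 1/(K:ℝ) - 1/m) atTop (𝓝 (1/K)) := by
    simpa using (tendsto_const_nhds (x := 1/(K:ℝ))).sub tendsto_one_div_atTop_nhds_zero_nat
  have h2 : Tendsto (fun m : ℕ => 1/(K:ℝ) + 1/m) atTop (𝓝 (1/K)) := by
    simpa using (tendsto_const_nhds (x := 1/(K:ℝ))).add tendsto_one_div_atTop_nhds_zero_nat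
  refine tendsto_of_tendsto_of_tendsto_of_le_of_le' h1 h2 ?_ ?_
  · filter_upwards [eventually_ge_atTop (K+1)] with m hm
    have hm1 : r < m := by omega
    have hcnt : cnt K r m = (m - r - 1)/K + 1 := by unfold cnt; rw [if_pos hm1]
    have hmR : (0:ℝ) < m := by exact_mod_cast (by omega : 0 < m)
    have hcast : ((m - r - 1 : ℕ) : ℝ) = (m:ℝ) - r - 1 := by
      have he : m - r - 1 = m - (r+1) := by omega
      rw [he, Nat.cast_sub (by omega)]; push_cast; ring
    have hrK : (r:ℝ) + 1 ≤ K := by exact_mod_cast hr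
    have hlb := natdiv_lb (m - r - 1) K hK
    rw [hcast] at hlb
    rw [hcnt]
    push_cast
    rw [show 1/(K:ℝ) - 1/m = ((m:ℝ)/K - 1)/m by field_simp]
    gcongr
    have heq : (m:ℝ)/K - 1 = ((m:ℝ) - K)/K := by field_simp
    have hx : ((m:ℝ) - K)/K ≤ ((m:ℝ) - r - 1)/K :=
      div_le_div_of_nonneg_right (by linarith) hKR.le |>.trans_eq rfl
    linarith
  · filter_upwards [eventually_ge_atTop (K+1)] with m hm
    have hm1 : r < m := by omega
    have hcnt : cnt K r m = (m - r - 1)/K + 1 := by unfold cnt; rw [if_pos hm1]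
    have hmR : (0:ℝ) < m := by exact_mod_cast (by omega : 0 < m)
    have hcast : ((m - r - 1 : ℕ) : ℝ) = (m:ℝ) - r - 1 := by
      have he : m - r - 1 = m - (r+1) := by omega
      rw [he, Nat.cast_sub (by omega)]; push_cast; ring
    have hub := Nat.cast_div_le (α := ℝ) (m := m - r - 1) (n := K)
    rw [hcast] at hub
    rw [hcnt]
    push_cast
    rw [show 1/(K:ℝ) + 1/m = ((m:ℝ)/K + 1)/m by field_simp]
    gcongr
    have hx : ((m:ℝ) - r - 1)/K ≤ (m:ℝ)/K := by
      have : (0:ℝ) ≤ r := Nat.cast_nonneg r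
      exact div_le_div_of_nonneg_right (by linarith) hKR.le
    linarith

lemma res_lim {K : ℕ} (hK : 0 < K) {r : ℕ} (hr : r < K) (a : ℕ → ℝ) (L : ℝ)
    (h : Tendsto (fun M => (∑ t ∈ range M, a (r + t*K))/M) atTop (𝓝 L)) :
    Tendsto (fun m => (∑ t ∈ range (cnt K r m), a (r + t*K))/m) atTop (𝓝 (L/K)) := by
  have hc : Tendsto (fun m => (∑ t ∈ range (cnt K r m), a (r + t*K))/(cnt K r m : ℝ))
      atTop (𝓝 L) := h.comp (cnt_tendsto_atTop hK r)
  have hmul := (cnt_ratio hK r hr).mul hc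
  rw [show 1/(K:ℝ) * L = L/K by ring] at hmul
  refine hmul.congr' ?_
  filter_upwards [(cnt_tendsto_atTop hK r).eventually_ge_atTop 1, eventually_ge_atTop 1]
    with m h1 h2
  have hc0 : (cnt K r m : ℝ) ≠ 0 := by
    exact_mod_cast Nat.one_le_iff_ne_zero.mp h1
  have hm0 : (m:ℝ) ≠ 0 := by
    exact_mod_cast Nat.one_le_iff_ne_zero.mp h2
  field_simp


lemma det_limit {K : ℕ} (hK : 0 < K) (a : ℕ → ℝ) (L : ℝ)
    (h : ∀ r, r < K → Tendsto (fun M => (∑ t ∈ range M, a (r + t*K))/M) atTop (𝓝 L)) :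
    Tendsto (fun m : ℕ => (∑ i ∈ range m, a i)/m) atTop (𝓝 L) := by
  have hsum : Tendsto (fun m : ℕ => ∑ r ∈ range K, (∑ t ∈ range (cnt K r m), a (r + t*K))/m)
      atTop (𝓝 (∑ _r ∈ range K, L/K)) :=
    tendsto_finset_sum _ (fun r hr => res_lim hK (mem_range.mp hr) a L (h r (mem_range.mp hr)))
  have hval : ∑ _r ∈ range K, L/(K:ℝ) = L := by
    rw [Finset.sum_const, card_range, nsmul_eq_mul]
    field_simp
  rw [hval] at hsum
  refine hsum.congr fun m => ?_
  rw [split_sum hK a m, Finset.sum_div]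

open MeasureTheory ProbabilityTheory in
theorem identInd {Ω : Type*} [MeasurableSpace Ω] (μ : MeasureTheory.Measure Ω) [MeasureTheory.IsProbabilityMeasure μ]
    {A B : Set Ω} (hA : MeasurableSet A) (hB : MeasurableSet B) (h : μ A = μ B) :
    ProbabilityTheory.IdentDistrib (A.indicator (fun _ => (1:ℝ)))
      (B.indicator (fun _ => (1:ℝ))) μ μ := by
  classical
  have measf : ∀ {C : Set Ω}, MeasurableSet C → Measurable (C.indicator (fun _ => (1:ℝ))) := by
    intro C hC; exact (measurable_const (a := (1:ℝ))).indicator hC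
  refine ⟨(measf hA).aemeasurable, (measf hB).aemeasurable, ?_⟩
  ext s hs
  rw [MeasureTheory.Measure.map_apply (measf hA) hs, MeasureTheory.Measure.map_apply (measf hB) hs]
  have hpre : ∀ (C : Set Ω), (C.indicator (fun _ => (1:ℝ))) ⁻¹' s =
      (if (1:ℝ) ∈ s then C else ∅) ∪ (if (0:ℝ) ∈ s then Cᶜ else ∅) := by
    intro C; ext ω
    by_cases hω : ω ∈ C <;> by_cases h1 : (1:ℝ) ∈ s <;> by_cases h0 : (0:ℝ) ∈ s <;>
      simp [Set.indicator_apply, Set.mem_preimage, hω, h1, h0]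
  rw [hpre, hpre]
  by_cases h1 : (1:ℝ) ∈ s <;> by_cases h0 : (0:ℝ) ∈ s <;>
    simp only [h1, h0, if_true, if_false, Set.union_empty, Set.empty_union, Set.union_compl_self]
  · exact h
  · rw [MeasureTheory.measure_compl hA (MeasureTheory.measure_ne_top μ A),
      MeasureTheory.measure_compl hB (MeasureTheory.measure_ne_top μ B), h]

open MeasureTheory ProbabilityTheory in
theorem sll {Ω : Type*} [MeasurableSpace Ω] (μ : Measure Ω) [IsProbabilityMeasure μ]
    (p : ℝ) (hp : 0 ≤ p) (X : ℕ → Ω → Bool) (hmeas : ∀ i, Measurable (X i))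
    (hindep : ProbabilityTheory.iIndepFun X μ)
    (hdist : ∀ i, (μ {ω | X i ω = true}).toReal = p) (K : ℕ) (hK : 0 < K) :
    ∀ᵐ ω ∂μ, Tendsto (fun m : ℕ =>
      (∑ i ∈ Finset.range m, ∏ j ∈ Finset.range K, (if X (i + j) ω then (1:ℝ) else 0)) / m)
      atTop (𝓝 (p ^ K)) := by
  classical
  set W : ℕ → Ω → ℝ := fun i ω => ∏ j ∈ Finset.range K, (if X (i + j) ω then (1:ℝ) else 0)
    with hWdef
  set A : ℕ → Set Ω := fun i => ⋂ n ∈ Finset.Ico i (i + K), X n ⁻¹' {true} with hAdef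
  have hIco : ∀ i ω, (∏ n ∈ Finset.Ico i (i+K), (if X n ω then (1:ℝ) else 0)) = W i ω := by
    intro i ω
    rw [hWdef, Finset.prod_Ico_eq_prod_range]
    simp
  have hWA : ∀ i, W i = (A i).indicator (fun _ => (1:ℝ)) := by
    intro i
    funext ω
    rw [← hIco i ω, Finset.prod_boole, Set.indicator_apply]
    have hmem : ω ∈ A i ↔ ∀ n ∈ Finset.Ico i (i+K), X n ω = true := by
      simp [hAdef]
    by_cases hh : ∀ n ∈ Finset.Ico i (i+K), X n ω = true
    · rw [if_pos hh, if_pos (hmem.mpr hh)]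
    · rw [if_neg hh, if_neg (fun hc => hh (hmem.mp hc))]
  have hAmeas : ∀ i, MeasurableSet (A i) := by
    intro i
    exact MeasurableSet.biInter (Finset.countable_toSet _)
      (fun n _ => (hmeas n) (by trivial))
  have hμA : ∀ i, μ (A i) = ENNReal.ofReal p ^ K := by
    intro i
    have hμi : ∀ n : ℕ, μ (X n ⁻¹' {true}) = ENNReal.ofReal p := by
      intro n
      have h1 : (X n ⁻¹' {true} : Set Ω) = {ω | X n ω = true} := by ext ω; simp
      rw [h1, ← hdist n, ENNReal.ofReal_toReal (measure_ne_top μ _)]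
    rw [hAdef]
    rw [hindep.meas_biInter (fun n _ => ⟨{true}, trivial, rfl⟩)]
    simp only [hμi]
    rw [Finset.prod_const, Nat.card_Ico]
    congr 1
    omega
  have hμAtoReal : ∀ i, (μ (A i)).toReal = p ^ K := by
    intro i
    rw [hμA i, ← ENNReal.ofReal_pow hp, ENNReal.toReal_ofReal (pow_nonneg hp K)]
  -- block independence
  have key : ∀ lo : ℕ, ∃ φ : ({x // x ∈ Finset.Ico lo (lo+K)} → Bool) → ℝ,
      Measurable φ ∧ W lo = φ ∘ (fun ω (n : {x // x ∈ Finset.Ico lo (lo+K)}) => X n ω) := by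
    intro lo
    refine ⟨fun v => ∏ n ∈ (Finset.Ico lo (lo+K)).attach, if v n then (1:ℝ) else 0, ?_, ?_⟩
    · refine Finset.measurable_prod _ (fun n _ => ?_)
      exact (measurable_from_top (f := fun b : Bool => if b then (1:ℝ) else 0)).comp
        (measurable_pi_apply n)
    · funext ω
      rw [← hIco lo ω, ← Finset.prod_attach (Finset.Ico lo (lo+K))
        (fun n => if X n ω then (1:ℝ) else 0)]
      rfl
  have indepW : ∀ i i', i + K ≤ i' → IndepFun (W i) (W i') μ := by
    intro i i' hii
    have hdisj : Disjoint (Finset.Ico i (i+K)) (Finset.Ico i' (i'+K)) := by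
      refine Finset.disjoint_left.mpr fun n hn hn' => ?_
      simp only [Finset.mem_Ico] at hn hn'
      omega
    have hbase := hindep.indepFun_finset (Finset.Ico i (i+K)) (Finset.Ico i' (i'+K)) hdisj hmeas
    obtain ⟨φ, hφm, hφe⟩ := key i
    obtain ⟨ψ, hψm, hψe⟩ := key i'
    rw [hφe, hψe]
    exact hbase.comp hφm hψm
  -- per-residue strong law
  have hres : ∀ r : ℕ, r < K → ∀ᵐ ω ∂μ, Tendsto
      (fun M : ℕ => (∑ t ∈ Finset.range M, W (r + t * K) ω) / M) atTop (𝓝 (p ^ K)) := by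
    intro r hr
    have hint : Integrable (W (r + 0 * K)) μ := by
      rw [hWA]
      exact (integrable_const (1:ℝ)).indicator (hAmeas _)
    have hpair : Pairwise (Function.onFun (IndepFun · · μ) fun t => W (r + t * K)) := by
      intro s t hst
      rcases lt_or_gt_of_ne hst with h | h
      · refine indepW _ _ ?_
        have : (s + 1) * K ≤ t * K := Nat.mul_le_mul_right K h
        nlinarith
      · refine (indepW _ _ ?_).symm
        have : (t + 1) * K ≤ s * K := Nat.mul_le_mul_right K h
        nlinarith
    have hident : ∀ t, IdentDistrib (W (r + t * K)) (W (r + 0 * K)) μ μ := by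
      intro t
      rw [hWA, hWA]
      exact identInd μ (hAmeas _) (hAmeas _) (by rw [hμA, hμA])
    have hlaw := strong_law_ae_real (fun t => W (r + t * K)) hint hpair hident
    have hmean : μ[W (r + 0 * K)] = p ^ K := by
      rw [hWA]
      rw [integral_indicator_const (1:ℝ) (hAmeas _)]
      rw [smul_eq_mul, mul_one, Measure.real, hμAtoReal]
    rw [hmean] at hlaw
    exact hlaw
  have hall : ∀ᵐ ω ∂μ, ∀ r : Fin K, Tendsto
      (fun M : ℕ => (∑ t ∈ Finset.range M, W (r.1 + t * K) ω) / M) atTop (𝓝 (p ^ K)) :=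
    ae_all_iff.2 (fun r => hres r.1 r.2)
  filter_upwards [hall] with ω hω
  exact det_limit hK (fun i => W i ω) (p ^ K) (fun r hr => hω ⟨r, hr⟩)

open MeasureTheory Filter

/-- Consistency: the streak-selection proportion converges almost surely to p. -/
theorem stmt11 {Ω : Type*} [MeasurableSpace Ω] (μ : Measure Ω) [IsProbabilityMeasure μ]
    (p : ℝ) (hp : 0 < p) (hp1 : p < 1) (X : ℕ → Ω → Bool) (hmeas : ∀ i, Measurable (X i))
    (hindep : ProbabilityTheory.iIndepFun X μ)
    (hdist : ∀ i, (μ {ω | X i ω = true}).toReal = p) (k : ℕ) (hk : 1 ≤ k) :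
    ∀ᵐ ω ∂μ, Tendsto (fun n : ℕ =>
      (∑ i ∈ Finset.range (n - k), ∏ j ∈ Finset.range (k + 1),
        (if X (i + j) ω then (1:ℝ) else 0)) /
      (∑ i ∈ Finset.range (n - k), ∏ j ∈ Finset.range k,
        (if X (i + j) ω then (1:ℝ) else 0)))
      atTop (nhds p) := by
  have hnum := sll μ p hp.le X hmeas hindep hdist (k + 1) (by omega)
  have hden := sll μ p hp.le X hmeas hindep hdist k (by omega)
  filter_upwards [hnum, hden] with ω hn hd
  have hpk : p ^ k ≠ 0 := pow_ne_zero k hp.ne'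
  have hratio := hn.div hd hpk
  rw [show p ^ (k+1) / p ^ k = p by rw [pow_succ]; field_simp] at hratio
  have heq : (fun m : ℕ =>
      ((∑ i ∈ Finset.range m, ∏ j ∈ Finset.range (k + 1),
        (if X (i + j) ω then (1:ℝ) else 0)) / m) /
      ((∑ i ∈ Finset.range m, ∏ j ∈ Finset.range k,
        (if X (i + j) ω then (1:ℝ) else 0)) / m)) =ᶠ[atTop]
      (fun m : ℕ =>
      (∑ i ∈ Finset.range m, ∏ j ∈ Finset.range (k + 1),
        (if X (i + j) ω then (1:ℝ) else 0)) /
      (∑ i ∈ Finset.range m, ∏ j ∈ Finset.range k,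
        (if X (i + j) ω then (1:ℝ) else 0))) := by
    filter_upwards [eventually_ge_atTop 1] with m hm
    have hm0 : (m:ℝ) ≠ 0 := by exact_mod_cast Nat.one_le_iff_ne_zero.mp hm
    set N := ∑ i ∈ Finset.range m, ∏ j ∈ Finset.range (k + 1),
        (if X (i + j) ω then (1:ℝ) else 0)
    set D := ∑ i ∈ Finset.range m, ∏ j ∈ Finset.range k,
        (if X (i + j) ω then (1:ℝ) else 0)
    rcases eq_or_ne D 0 with hD | hD
    · simp [hD]
    · field_simp
  have hfinal := hratio.congr' heq
  exact hfinal.comp (tendsto_sub_atTop_nat k)
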